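/- Let f : ℝ → ℝ be C¹ with f'(y) > 0 for all y, let p > 0 and q ∈ ℝ, and define φ(y) = q − p·y − f((q − f(y))/p). A point y ∈ ℝ satisfies both f(y) = q − p·y and φ'(y) = 0 if and only if p = f'(y) and q = f'(y)·y + f(y). Consequently, the set of parameters (p,q) for which the fixed point of the model Poincaré map is a multiple root of the period-two equation is exactly the curve parametrized by L₀(y) = (f'(y), f'(y)·y + f(y)). -/

import Mathlib

/-- For `f` of class `C¹` with `f' > 0`, `p > 0` and `q ∈ ℝ`, a point `y` satisfies
both the fixed-point equation `f(y) = q − p·y` and `φ'(y) = 0` (where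
`φ(y) = q − p·y − f((q − f(y))/p)`) if and only if `p = f'(y)` and
`q = f'(y)·y + f(y)`; so the corresponding parameter set is exactly the curve
`L₀(y) = (f'(y), f'(y)·y + f(y))`. -/
theorem flip_curve_characterization (f : ℝ → ℝ) (hf : ContDiff ℝ 1 f)
    (hpos : ∀ y : ℝ, 0 < deriv f y) (p q : ℝ) (hp : 0 < p) :
    ∀ y : ℝ,
      (f y = q - p * y ∧ deriv (fun y => q - p * y - f ((q - f y) / p)) y = 0) ↔
      (p = deriv f y ∧ q = deriv f y * y + f y) := by
  intro y
  have hdf : Differentiable ℝ f := hf.differentiable one_ne_zero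
  have hp0 : p ≠ 0 := ne_of_gt hp
  have hg : HasDerivAt (fun y => (q - f y) / p) (-(deriv f y) / p) y :=
    (((hdf y).hasDerivAt.const_sub q).div_const p)
  have hcomp : HasDerivAt (fun y => f ((q - f y) / p))
      (deriv f ((q - f y) / p) * (-(deriv f y) / p)) y :=
    (hdf _).hasDerivAt.comp y hg
  have hlin : HasDerivAt (fun y : ℝ => q - p * y) (-p) y := by
    simpa using ((hasDerivAt_id y).const_mul p).const_sub q
  have hφ : HasDerivAt (fun y => q - p * y - f ((q - f y) / p))
      (-p - deriv f ((q - f y) / p) * (-(deriv f y) / p)) y := hlin.sub hcomp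
  rw [hφ.deriv]
  constructor
  · rintro ⟨hfix, hder⟩
    have hpt : (q - f y) / p = y := by
      rw [hfix]; field_simp; ring
    rw [hpt] at hder
    have key : p * p = deriv f y * deriv f y := by
      field_simp at hder
      nlinarith [hpos y]
    have hpe : p = deriv f y := by nlinarith [hpos y]
    exact ⟨hpe, by rw [← hpe]; linarith [hfix]⟩
  · rintro ⟨hpe, hq⟩
    have hfix : f y = q - p * y := by rw [hq, ← hpe]; ring
    have hpt : (q - f y) / p = y := by rw [hfix]; field_simp; ring
    refine ⟨hfix, ?_⟩
    rw [hpt, ← hpe]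
    field_simp
    ring
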